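/- For a distributive lattice L and a triple (a,b,c) ∈ L³, the triple ⟨(a ∨ (b ∧ c), b ∨ (a ∧ c), c ∨ (a ∧ b))⟩ is balanced (i.e., its three pairwise meets coincide) and is the least balanced triple above (a,b,c) in L³. -/
import Mathlib


/-- A triple `(a,b,c)` in a lattice is balanced if `a ⊓ b = a ⊓ c = b ⊓ c`. -/
def IsBalanced3 {L : Type*} [Lattice L] (t : L × L × L) : Prop :=
  t.1 ⊓ t.2.1 = t.1 ⊓ t.2.2 ∧ t.1 ⊓ t.2.2 = t.2.1 ⊓ t.2.2

private lemma key_meet {L : Type*} [DistribLattice L] (x y z : L) :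
    (x ⊔ y ⊓ z) ⊓ (y ⊔ x ⊓ z) = x ⊓ y ⊔ x ⊓ z ⊔ y ⊓ z := by
  rw [inf_sup_left, inf_sup_right, inf_sup_right]
  apply le_antisymm
  · apply sup_le
    apply sup_le
    · exact le_sup_of_le_left le_sup_left
    · exact le_sup_of_le_right inf_le_left
    apply sup_le
    · exact le_sup_of_le_left (le_sup_of_le_right inf_le_right)
    · exact le_sup_of_le_right inf_le_left
  · apply sup_le
    apply sup_le
    · exact le_sup_of_le_left le_sup_left
    · exact le_sup_of_le_right (le_sup_of_le_left (le_inf inf_le_left le_rfl))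
    · exact le_sup_of_le_left (le_sup_of_le_right (le_inf le_rfl inf_le_left))

theorem stmt0 {L : Type*} [DistribLattice L] (a b c : L) :
    IsBalanced3 (a ⊔ b ⊓ c, b ⊔ a ⊓ c, c ⊔ a ⊓ b) ∧
    (a, b, c) ≤ (a ⊔ b ⊓ c, b ⊔ a ⊓ c, c ⊔ a ⊓ b) ∧
    ∀ u : L × L × L, IsBalanced3 u → (a, b, c) ≤ u →
      (a ⊔ b ⊓ c, b ⊔ a ⊓ c, c ⊔ a ⊓ b) ≤ u := by
  refine ⟨⟨?_, ?_⟩, ⟨le_sup_left, le_sup_left, le_sup_left⟩, ?_⟩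
  · show (a ⊔ b ⊓ c) ⊓ (b ⊔ a ⊓ c) = (a ⊔ b ⊓ c) ⊓ (c ⊔ a ⊓ b)
    rw [key_meet, show b ⊓ c = c ⊓ b from inf_comm .., key_meet]
    simp [sup_comm, sup_left_comm, inf_comm, inf_left_comm, sup_assoc]
  · show (a ⊔ b ⊓ c) ⊓ (c ⊔ a ⊓ b) = (b ⊔ a ⊓ c) ⊓ (c ⊔ a ⊓ b)
    rw [show b ⊓ c = c ⊓ b from inf_comm .., key_meet,
        show a ⊓ c = c ⊓ a from inf_comm .., show a ⊓ b = b ⊓ a from inf_comm ..,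
        key_meet]
    simp [sup_comm, sup_left_comm, inf_comm, inf_left_comm, sup_assoc]
  · rintro ⟨u, v, w⟩ ⟨h1, h2⟩ ⟨ha, hb, hc⟩
    simp only at *
    refine ⟨?_, ?_, ?_⟩
    · exact sup_le ha (le_trans (inf_le_inf hb hc) (le_of_eq_of_le h2.symm inf_le_left))
    · exact sup_le hb (le_trans (inf_le_inf ha hc) (le_of_eq_of_le h2 inf_le_left))
    · exact sup_le hc (le_trans (inf_le_inf ha hb) (le_of_eq_of_le (h1.trans h2) inf_le_right))
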